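/- Let ℓ be an odd prime, n ≥ 1, ζ a primitive ℓ^n-th root of unity, and let i, j be integers with i, j, i+j, i−j all nonzero mod ℓ^n. Then E(ζ^i, ζ^j) and F(ζ^i, ζ^j) are algebraic units (units of the ring of integers of ℚ(ζ)), fixed by complex conjugation, summing to 1; in particular the unit equation ε + δ = 1 has a solution in units of the ring of integers of the maximal real subfield ℚ(ζ)⁺. -/

import Mathlib

open Polynomial in
lemma aux_int_of_pow_eq_one {K : Type*} [Field K] {ω : K} {d : ℕ} (hd : 0 < d)
    (hω : ω ^ d = 1) : IsIntegral ℤ ω :=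
  ⟨X ^ d - 1, by simpa using monic_X_pow_sub_C (1:ℤ) hd.ne', by simp [hω]⟩

lemma aux_unit {K : Type*} [Field K] [CharZero K] {ω : K} {d : ℕ} (hd : Odd d)
    (h1 : ω ≠ 1) (hω : ω ^ d = 1) :
    (1 + ω ≠ 0) ∧ IsIntegral ℤ (1 + ω) ∧ IsIntegral ℤ (1 + ω)⁻¹ := by
  have hd0 : 0 < d := hd.pos
  have hωint : IsIntegral ℤ ω := aux_int_of_pow_eq_one hd0 hω
  have hne : 1 + ω ≠ 0 := by
    intro h
    have hω1 : ω = -1 := by linear_combination h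
    rw [hω1, hd.neg_one_pow] at hω
    exact (by norm_num : ((-1 : K)) ≠ 1) hω
  refine ⟨hne, isIntegral_one.add hωint, ?_⟩
  obtain ⟨c, hc⟩ := hd
  set S : K := ∑ k ∈ Finset.range (c + 1), (ω ^ 2) ^ k with hS
  have hgeom : S * (ω ^ 2 - 1) = (ω ^ 2) ^ (c + 1) - 1 := geom_sum_mul _ _
  have hpow : (ω ^ 2) ^ (c + 1) = ω := by
    rw [← pow_mul]
    have : 2 * (c + 1) = d + 1 := by omega
    rw [this, pow_succ, hω, one_mul]
  have hmain : (1 + ω) * S = 1 := by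
    have hω1 : ω - 1 ≠ 0 := sub_ne_zero_of_ne h1
    apply mul_right_cancel₀ hω1
    calc (1 + ω) * S * (ω - 1) = S * (ω ^ 2 - 1) := by ring
    _ = ω - 1 := by rw [hgeom, hpow]
    _ = 1 * (ω - 1) := by ring
  have hSint : IsIntegral ℤ S := by
    rw [hS]
    apply IsIntegral.sum
    intro k _
    exact (hωint.pow 2).pow k
  rwa [inv_eq_of_mul_eq_one_right hmain]

lemma aux_d1 {K : Type*} [Field K] (x y : K) (hx : x ≠ 0) (hy : y ≠ 0)
    (hv : 1 + (x * y⁻¹) ^ 2 ≠ 0) : x * y⁻¹ + x⁻¹ * y ≠ 0 := by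
  have : x * y⁻¹ + x⁻¹ * y = (x⁻¹ * y) * (1 + (x * y⁻¹) ^ 2) := by
    field_simp; ring
  rw [this]
  exact mul_ne_zero (mul_ne_zero (inv_ne_zero hx) hy) hv

lemma aux_d2 {K : Type*} [Field K] (x y : K) (hx : x ≠ 0) (hy : y ≠ 0)
    (hu : 1 + (x * y) ^ 2 ≠ 0) : x * y + x⁻¹ * y⁻¹ ≠ 0 := by
  have : x * y + x⁻¹ * y⁻¹ = (x⁻¹ * y⁻¹) * (1 + (x * y) ^ 2) := by
    field_simp; ring
  rw [this]
  exact mul_ne_zero (mul_ne_zero (inv_ne_zero hx) (inv_ne_zero hy)) hu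

lemma aux_split {K : Type*} [Field K] (x y : K) (hx : x ≠ 0) (hy : y ≠ 0)
    (hu : 1 + (x * y) ^ 2 ≠ 0) (hv : 1 + (x * y⁻¹) ^ 2 ≠ 0) :
    (x ^ 2 + (x⁻¹) ^ 2) / ((x * y⁻¹ + x⁻¹ * y) * (x * y + x⁻¹ * y⁻¹))
      = (1 + x ^ 4) / ((1 + (x * y) ^ 2) * (1 + (x * y⁻¹) ^ 2)) := by
  have h1 := aux_d1 x y hx hy hv
  have h2 := aux_d2 x y hx hy hu
  rw [div_eq_div_iff (mul_ne_zero h1 h2) (mul_ne_zero hu hv)]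
  field_simp
  ring

lemma aux_split2 {K : Type*} [Field K] (x y : K) (hx : x ≠ 0) (hy : y ≠ 0)
    (hu : 1 + (x * y) ^ 2 ≠ 0) (hv : 1 + (x * y⁻¹) ^ 2 ≠ 0)
    (hv' : 1 + (x⁻¹ * y) ^ 2 ≠ 0) :
    (y ^ 2 + (y⁻¹) ^ 2) / ((x * y⁻¹ + x⁻¹ * y) * (x * y + x⁻¹ * y⁻¹))
      = (1 + y ^ 4) / ((1 + (x * y) ^ 2) * (1 + (x⁻¹ * y) ^ 2)) := by
  have h1 := aux_d1 x y hx hy hv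
  have h2 := aux_d2 x y hx hy hu
  rw [div_eq_div_iff (mul_ne_zero h1 h2) (mul_ne_zero hu hv')]
  field_simp
  ring

lemma aux_cheb {K : Type*} [Field K] [CharZero K] (ζ : K) (hζ0 : ζ ≠ 0) (k : ℕ) :
    ζ ^ k + (ζ⁻¹) ^ k ∈ IntermediateField.adjoin ℚ {ζ + ζ⁻¹} := by
  induction k using Nat.twoStepInduction with
  | zero => simp only [pow_zero]; exact add_mem (one_mem _) (one_mem _)
  | one => simpa only [pow_one] using IntermediateField.mem_adjoin_simple_self ℚ (ζ + ζ⁻¹)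
  | more k ih1 ih2 =>
    have key : ζ ^ (k + 2) + (ζ⁻¹) ^ (k + 2)
        = (ζ + ζ⁻¹) * (ζ ^ (k + 1) + (ζ⁻¹) ^ (k + 1)) - (ζ ^ k + (ζ⁻¹) ^ k) := by
      have h : ζ * ζ⁻¹ = 1 := mul_inv_cancel₀ hζ0
      linear_combination (-(ζ⁻¹ ^ k + ζ ^ k)) * h
    rw [key]
    exact sub_mem (mul_mem (IntermediateField.mem_adjoin_simple_self ℚ (ζ + ζ⁻¹)) ih2) ih1

lemma aux_chebZ {K : Type*} [Field K] [CharZero K] (ζ : K) (hζ0 : ζ ≠ 0) (k : ℤ) :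
    ζ ^ k + ζ ^ (-k) ∈ IntermediateField.adjoin ℚ {ζ + ζ⁻¹} := by
  have hcast : ∀ m : ℕ, ζ ^ (-(m : ℤ)) = (ζ⁻¹) ^ m := by
    intro m
    rw [zpow_neg, zpow_natCast, inv_pow]
  rcases Int.natAbs_eq k with h | h
  · rw [h, zpow_natCast, hcast]
    exact aux_cheb ζ hζ0 k.natAbs
  · rw [h, neg_neg, zpow_natCast, hcast, add_comm (ζ⁻¹ ^ k.natAbs) (ζ ^ k.natAbs)]
    exact aux_cheb ζ hζ0 k.natAbs

theorem stmt_19 (ℓ : ℕ) (hℓ : ℓ.Prime) (hodd : Odd ℓ) (n : ℕ) (hn : 1 ≤ n)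
    (K : Type*) [Field K] [CharZero K] (ζ : K)
    (hζ : IsPrimitiveRoot ζ (ℓ ^ n)) (i j : ℤ)
    (hi : ¬ ((ℓ : ℤ) ^ n ∣ i)) (hj : ¬ ((ℓ : ℤ) ^ n ∣ j))
    (hij : ¬ ((ℓ : ℤ) ^ n ∣ (i + j))) (hij' : ¬ ((ℓ : ℤ) ^ n ∣ (i - j))) :
    let α : K := ζ ^ i
    let β : K := ζ ^ j
    let E : K := (α ^ 2 + (α⁻¹) ^ 2) /
      ((α * β⁻¹ + α⁻¹ * β) * (α * β + α⁻¹ * β⁻¹))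
    let F : K := (β ^ 2 + (β⁻¹) ^ 2) /
      ((α * β⁻¹ + α⁻¹ * β) * (α * β + α⁻¹ * β⁻¹))
    -- `E` and `F` are algebraic units, fixed by complex conjugation, summing to 1;
    -- in particular they give a solution of the unit equation in the units of the
    -- ring of integers of the maximal real subfield ℚ(ζ + ζ⁻¹).
    E + F = 1 ∧
      IsIntegral ℤ E ∧ IsIntegral ℤ E⁻¹ ∧ IsIntegral ℤ F ∧ IsIntegral ℤ F⁻¹ ∧
      (∀ σ : K →+* K, σ ζ = ζ⁻¹ → σ E = E ∧ σ F = F) ∧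
      E ∈ IntermediateField.adjoin ℚ {ζ + ζ⁻¹} ∧
      F ∈ IntermediateField.adjoin ℚ {ζ + ζ⁻¹} := by
  intro α β E F
  have hpow_pos : 0 < ℓ ^ n := pow_pos hℓ.pos n
  have hζ0 : ζ ≠ 0 := hζ.ne_zero hpow_pos.ne'
  have hone : ∀ m : ℤ, ζ ^ m = 1 ↔ ((ℓ : ℤ) ^ n) ∣ m := by
    intro m
    have h := hζ.zpow_eq_one_iff_dvd m
    rwa [Nat.cast_pow] at h
  -- coprimality with 2
  have hl2 : ℓ ≠ 2 := by
    rintro rfl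
    simp [Nat.odd_iff] at hodd
  have hcopN : Nat.Coprime (ℓ ^ n) 2 :=
    (((Nat.coprime_primes hℓ Nat.prime_two).mpr hl2)).pow_left n
  have hcop : IsCoprime ((ℓ : ℤ) ^ n) (2 : ℤ) := by
    have h := Nat.isCoprime_iff_coprime.mpr hcopN
    push_cast at h
    exact h
  have hdvd2 : ∀ k : ℤ, ((ℓ : ℤ) ^ n ∣ 2 * k) → ((ℓ : ℤ) ^ n ∣ k) := fun k h =>
    hcop.dvd_of_dvd_mul_left h
  -- the basic units 1 + ζ^(2k)
  have key : ∀ k : ℤ, ¬ ((ℓ : ℤ) ^ n ∣ k) →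
      (1 + ζ ^ (2 * k) ≠ 0) ∧ IsIntegral ℤ (1 + ζ ^ (2 * k)) ∧
        IsIntegral ℤ (1 + ζ ^ (2 * k))⁻¹ := by
    intro k hk
    refine aux_unit (Odd.pow hodd : Odd (ℓ ^ n)) ?_ ?_
    · intro h
      exact hk (hdvd2 k ((hone (2 * k)).mp h))
    · show (ζ ^ (2 * k)) ^ (ℓ ^ n) = 1
      rw [← zpow_natCast (ζ ^ (2 * k)), ← zpow_mul, mul_comm, zpow_mul, zpow_natCast,
        hζ.pow_eq_one, one_zpow]
  have hx0 : ζ ^ i ≠ 0 := zpow_ne_zero _ hζ0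
  have hy0 : ζ ^ j ≠ 0 := zpow_ne_zero _ hζ0
  have hmul : ∀ a b : ℤ, ζ ^ a * ζ ^ b = ζ ^ (a + b) := fun a b => (zpow_add₀ hζ0 a b).symm
  have hinv : ∀ a : ℤ, (ζ ^ a)⁻¹ = ζ ^ (-a) := fun a => (zpow_neg ζ a).symm
  have hsq : ∀ a : ℤ, (ζ ^ a) ^ (2 : ℕ) = ζ ^ (2 * a) := by
    intro a
    rw [← zpow_natCast (ζ ^ a) 2, ← zpow_mul]
    first
      | (congr 1; ring)
      | congr 1
  have hq4 : ∀ a : ℤ, (ζ ^ a) ^ (4 : ℕ) = ζ ^ (2 * (2 * a)) := by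
    intro a
    rw [← zpow_natCast (ζ ^ a) 4, ← zpow_mul]
    first
      | (congr 1; ring)
      | congr 1
  -- components in zpow form
  have h_xy : ζ ^ i * ζ ^ j = ζ ^ (i + j) := hmul i j
  have h_xyb : ζ ^ i * (ζ ^ j)⁻¹ = ζ ^ (i - j) := by
    rw [hinv, hmul]
    first
      | (congr 1; ring)
      | congr 1
  have h_xby : (ζ ^ i)⁻¹ * ζ ^ j = ζ ^ (-(i - j)) := by
    rw [hinv, hmul]
    first
      | (congr 1; ring)
      | congr 1
  have h_xbyb : (ζ ^ i)⁻¹ * (ζ ^ j)⁻¹ = ζ ^ (-(i + j)) := by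
    rw [hinv, hinv, hmul]
    first
      | (congr 1; ring)
      | congr 1
  have h_xy2 : (ζ ^ i * ζ ^ j) ^ (2 : ℕ) = ζ ^ (2 * (i + j)) := by rw [h_xy, hsq]
  have h_xyb2 : (ζ ^ i * (ζ ^ j)⁻¹) ^ (2 : ℕ) = ζ ^ (2 * (i - j)) := by rw [h_xyb, hsq]
  have h_xby2 : ((ζ ^ i)⁻¹ * ζ ^ j) ^ (2 : ℕ) = ζ ^ (2 * (j - i)) := by
    rw [h_xby, hsq]
    first
      | (congr 1; ring)
      | congr 1
  -- units
  have u1 := key (2 * i) (fun h => hi (hdvd2 i h))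
  have u1' := key (2 * j) (fun h => hj (hdvd2 j h))
  have u2 := key (i + j) hij
  have u3 := key (i - j) hij'
  have u4 := key (j - i) (by
    rw [show j - i = -(i - j) by ring, dvd_neg]
    exact hij')
  have hu : (1 : K) + (ζ ^ i * ζ ^ j) ^ (2 : ℕ) ≠ 0 := by rw [h_xy2]; exact u2.1
  have hv : (1 : K) + (ζ ^ i * (ζ ^ j)⁻¹) ^ (2 : ℕ) ≠ 0 := by rw [h_xyb2]; exact u3.1
  have hv' : (1 : K) + ((ζ ^ i)⁻¹ * ζ ^ j) ^ (2 : ℕ) ≠ 0 := by rw [h_xby2]; exact u4.1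
  -- E and F in unit form
  have hEeq : E = (1 + ζ ^ (2 * (2 * i))) /
      ((1 + ζ ^ (2 * (i + j))) * (1 + ζ ^ (2 * (i - j)))) := by
    show ((ζ ^ i) ^ 2 + ((ζ ^ i)⁻¹) ^ 2) /
        ((ζ ^ i * (ζ ^ j)⁻¹ + (ζ ^ i)⁻¹ * ζ ^ j) * (ζ ^ i * ζ ^ j + (ζ ^ i)⁻¹ * (ζ ^ j)⁻¹)) = _
    rw [aux_split (ζ ^ i) (ζ ^ j) hx0 hy0 hu hv, hq4, h_xy2, h_xyb2]
  have hFeq : F = (1 + ζ ^ (2 * (2 * j))) /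
      ((1 + ζ ^ (2 * (i + j))) * (1 + ζ ^ (2 * (j - i)))) := by
    show ((ζ ^ j) ^ 2 + ((ζ ^ j)⁻¹) ^ 2) /
        ((ζ ^ i * (ζ ^ j)⁻¹ + (ζ ^ i)⁻¹ * ζ ^ j) * (ζ ^ i * ζ ^ j + (ζ ^ i)⁻¹ * (ζ ^ j)⁻¹)) = _
    rw [aux_split2 (ζ ^ i) (ζ ^ j) hx0 hy0 hu hv hv', hq4, h_xy2, h_xby2]
  -- E and F in real (cosine) form
  have hNE : E = (ζ ^ (2 * i) + ζ ^ (-(2 * i))) /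
      ((ζ ^ (i - j) + ζ ^ (-(i - j))) * (ζ ^ (i + j) + ζ ^ (-(i + j)))) := by
    show ((ζ ^ i) ^ 2 + ((ζ ^ i)⁻¹) ^ 2) /
        ((ζ ^ i * (ζ ^ j)⁻¹ + (ζ ^ i)⁻¹ * ζ ^ j) * (ζ ^ i * ζ ^ j + (ζ ^ i)⁻¹ * (ζ ^ j)⁻¹)) = _
    rw [h_xyb, h_xby, h_xy, h_xbyb, hsq, hinv, hsq,
      show (2 * -i : ℤ) = -(2 * i) from by ring]
  have hNF : F = (ζ ^ (2 * j) + ζ ^ (-(2 * j))) /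
      ((ζ ^ (i - j) + ζ ^ (-(i - j))) * (ζ ^ (i + j) + ζ ^ (-(i + j)))) := by
    show ((ζ ^ j) ^ 2 + ((ζ ^ j)⁻¹) ^ 2) /
        ((ζ ^ i * (ζ ^ j)⁻¹ + (ζ ^ i)⁻¹ * ζ ^ j) * (ζ ^ i * ζ ^ j + (ζ ^ i)⁻¹ * (ζ ^ j)⁻¹)) = _
    rw [h_xyb, h_xby, h_xy, h_xbyb, hsq, hinv, hsq,
      show (2 * -j : ℤ) = -(2 * j) from by ring]
  -- denominator nonzero
  have hD0 : (ζ ^ i * (ζ ^ j)⁻¹ + (ζ ^ i)⁻¹ * ζ ^ j) *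
      (ζ ^ i * ζ ^ j + (ζ ^ i)⁻¹ * (ζ ^ j)⁻¹) ≠ 0 :=
    mul_ne_zero (aux_d1 _ _ hx0 hy0 hv) (aux_d2 _ _ hx0 hy0 hu)
  refine ⟨?_, ?_, ?_, ?_, ?_, ?_, ?_, ?_⟩
  · -- E + F = 1
    show ((ζ ^ i) ^ 2 + ((ζ ^ i)⁻¹) ^ 2) /
        ((ζ ^ i * (ζ ^ j)⁻¹ + (ζ ^ i)⁻¹ * ζ ^ j) * (ζ ^ i * ζ ^ j + (ζ ^ i)⁻¹ * (ζ ^ j)⁻¹)) +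
      ((ζ ^ j) ^ 2 + ((ζ ^ j)⁻¹) ^ 2) /
        ((ζ ^ i * (ζ ^ j)⁻¹ + (ζ ^ i)⁻¹ * ζ ^ j) * (ζ ^ i * ζ ^ j + (ζ ^ i)⁻¹ * (ζ ^ j)⁻¹)) = 1
    rw [← add_div, div_eq_one_iff_eq hD0]
    field_simp
    ring
  · rw [hEeq, div_eq_mul_inv, mul_inv]
    exact u1.2.1.mul (u2.2.2.mul u3.2.2)
  · rw [hEeq, inv_div, div_eq_mul_inv]
    exact (u2.2.1.mul u3.2.1).mul u1.2.2
  · rw [hFeq, div_eq_mul_inv, mul_inv]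
    exact u1'.2.1.mul (u2.2.2.mul u4.2.2)
  · rw [hFeq, inv_div, div_eq_mul_inv]
    exact (u2.2.1.mul u4.2.1).mul u1'.2.2
  · -- conjugation
    intro σ hσ
    have hσx : σ (ζ ^ i) = (ζ ^ i)⁻¹ := by rw [map_zpow₀, hσ, inv_zpow]
    have hσy : σ (ζ ^ j) = (ζ ^ j)⁻¹ := by rw [map_zpow₀, hσ, inv_zpow]
    constructor
    · show σ (((ζ ^ i) ^ 2 + ((ζ ^ i)⁻¹) ^ 2) /
          ((ζ ^ i * (ζ ^ j)⁻¹ + (ζ ^ i)⁻¹ * ζ ^ j) *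
            (ζ ^ i * ζ ^ j + (ζ ^ i)⁻¹ * (ζ ^ j)⁻¹))) = E
      show _ = ((ζ ^ i) ^ 2 + ((ζ ^ i)⁻¹) ^ 2) /
          ((ζ ^ i * (ζ ^ j)⁻¹ + (ζ ^ i)⁻¹ * ζ ^ j) *
            (ζ ^ i * ζ ^ j + (ζ ^ i)⁻¹ * (ζ ^ j)⁻¹))
      simp only [map_div₀, map_add, map_mul, map_pow, map_inv₀, hσx, hσy, inv_inv]
      congr 1 <;> ring
    · show σ (((ζ ^ j) ^ 2 + ((ζ ^ j)⁻¹) ^ 2) /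
          ((ζ ^ i * (ζ ^ j)⁻¹ + (ζ ^ i)⁻¹ * ζ ^ j) *
            (ζ ^ i * ζ ^ j + (ζ ^ i)⁻¹ * (ζ ^ j)⁻¹))) = F
      show _ = ((ζ ^ j) ^ 2 + ((ζ ^ j)⁻¹) ^ 2) /
          ((ζ ^ i * (ζ ^ j)⁻¹ + (ζ ^ i)⁻¹ * ζ ^ j) *
            (ζ ^ i * ζ ^ j + (ζ ^ i)⁻¹ * (ζ ^ j)⁻¹))
      simp only [map_div₀, map_add, map_mul, map_pow, map_inv₀, hσx, hσy, inv_inv]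
      congr 1 <;> ring
  · rw [hNE]
    exact div_mem (aux_chebZ ζ hζ0 (2 * i))
      (mul_mem (aux_chebZ ζ hζ0 (i - j)) (aux_chebZ ζ hζ0 (i + j)))
  · rw [hNF]
    exact div_mem (aux_chebZ ζ hζ0 (2 * j))
      (mul_mem (aux_chebZ ζ hζ0 (i - j)) (aux_chebZ ζ hζ0 (i + j)))
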